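/- The fixed point h* of ḣ = h²r_GG + h(1−h)(r_GB+r_BG) + (1−h)²r_BB − h equals 1 and is stable (i.e., h*=1 is a root and the derivative of the right-hand side at h=1 is negative) if and only if r_GG = 1 and r_GB + r_BG > 1. -/

import Mathlib

/-- The fixed point `h* = 1` of the reputation dynamics exists and is stable
(`f(1) = 0` and `f'(1) < 0`) if and only if `r_GG = 1` and `r_GB + r_BG > 1`. -/
theorem stmt_6 (rGG rGB rBG rBB : ℝ)
    (hGG : rGG ∈ Set.Icc (0 : ℝ) 1) (hGB : rGB ∈ Set.Icc (0 : ℝ) 1)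
    (hBG : rBG ∈ Set.Icc (0 : ℝ) 1) (hBB : rBB ∈ Set.Icc (0 : ℝ) 1)
    (f : ℝ → ℝ)
    (hf : ∀ h : ℝ, f h = h^2 * rGG + h * (1 - h) * (rGB + rBG) + (1 - h)^2 * rBB - h) :
    (f 1 = 0 ∧ deriv f 1 < 0) ↔ (rGG = 1 ∧ rGB + rBG > 1) := by
  have hfe : f = fun h => h^2 * rGG + h * (1 - h) * (rGB + rBG) + (1 - h)^2 * rBB - h :=
    funext hf
  have hid : HasDerivAt (fun h : ℝ => h) 1 1 := hasDerivAt_id 1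
  have hd : HasDerivAt f (((2*1 * rGG + (1 - 2*1) * (rGB + rBG)) + (2*(1-1)*(0-1)) * rBB) - 1) 1 := by
    rw [hfe]
    convert ((((hid.pow 2).mul_const rGG).add
      (((hid.mul ((hasDerivAt_const 1 (1:ℝ)).sub hid)).mul_const (rGB + rBG)))).add
      ((((hasDerivAt_const 1 (1:ℝ)).sub hid).pow 2).mul_const rBB)).sub hid using 1
    · rfl
    · rfl
    · funext h; simp
    · simp only [Pi.sub_apply]; push_cast; ring
  have hdv : deriv f 1 = 2 * rGG - (rGB + rBG) - 1 := by
    rw [hd.deriv]; ring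
  have hf1 : f 1 = rGG - 1 := by rw [hf]; ring
  constructor
  · rintro ⟨h1, h2⟩
    have hG : rGG = 1 := by linarith [hf1 ▸ h1]
    refine ⟨hG, by rw [hdv, hG] at h2; linarith⟩
  · rintro ⟨hG, hc⟩
    exact ⟨by rw [hf1, hG]; ring, by rw [hdv, hG]; linarith⟩
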